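/- arXiv:2509.06866 — 4 statements merged into one kernel-verified Lean document; each statement's English description precedes it below -/
import Mathlib

section
/- Let n ≥ 2 and let V denote the real vector space of quadruples (u,b,M,Q) where u,b ∈ ℝⁿ, M is a trace-free symmetric real n×n matrix, and Q is a skew-symmetric real n×n matrix. Let K ⊂ V be the set of quadruples (u,b,M,Q) with |u| = |b| = 1, M = u ⊗ u − b ⊗ b, and Q = b ⊗ u − u ⊗ b. Then 0 lies in the interior, relative to V, of the convex hull of K; that is, there exists ε > 0 such that every (u,b,M,Q) ∈ V with norm less than ε belongs to the convex hull of K. -/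
open Finset

section MHDHelpers

variable {n : ℕ}

/-- The space of quadruples. -/
abbrev Vn (n : ℕ) := (Fin n → ℝ) × (Fin n → ℝ) ×
    Matrix (Fin n) (Fin n) ℝ × Matrix (Fin n) (Fin n) ℝ

/-- The constitutive set. -/
def KS (n : ℕ) : Set (Vn n) :=
  {z | (∑ i, (z.1 i) ^ 2) = 1 ∧ (∑ i, (z.2.1 i) ^ 2) = 1 ∧
    (∀ i j, z.2.2.1 i j = z.1 i * z.1 j - z.2.1 i * z.2.1 j) ∧
    (∀ i j, z.2.2.2 i j = z.2.1 i * z.1 j - z.1 i * z.2.1 j)}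

lemma mem_KS (u b : Fin n → ℝ) (hu : ∑ i, (u i)^2 = 1) (hb : ∑ i, (b i)^2 = 1) :
    ((u, b, (fun i j => u i * u j - b i * b j : Matrix (Fin n) (Fin n) ℝ),
      (fun i j => b i * u j - u i * b j : Matrix (Fin n) (Fin n) ℝ)) : Vn n) ∈ KS n :=
  ⟨hu, hb, fun _ _ => rfl, fun _ _ => rfl⟩

lemma neg_unit (u : Fin n → ℝ) (hu : ∑ i, (u i)^2 = 1) : ∑ i, ((-u) i)^2 = 1 := by
  simpa using hu

lemma hullUB (u : Fin n → ℝ) (hu : ∑ i, (u i)^2 = 1) (s t : ℝ)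
    (hs : |s| ≤ 1) (ht : |t| ≤ 1) :
    ((s • u, t • u, (0 : Matrix (Fin n) (Fin n) ℝ), (0 : Matrix (Fin n) (Fin n) ℝ)))
      ∈ convexHull ℝ (KS n) := by
  have hs' := abs_le.1 hs
  have ht' := abs_le.1 ht
  have cvx := convex_convexHull ℝ (KS n)
  have k1 := subset_convexHull ℝ (KS n) (mem_KS u u hu hu)
  have k2 := subset_convexHull ℝ (KS n) (mem_KS u (-u) hu (neg_unit u hu))
  have k3 := subset_convexHull ℝ (KS n) (mem_KS (-u) u (neg_unit u hu) hu)
  have k4 := subset_convexHull ℝ (KS n) (mem_KS (-u) (-u) (neg_unit u hu) (neg_unit u hu))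
  have P1 := cvx k1 k2 (by linarith : (0:ℝ) ≤ (1+t)/2) (by linarith : (0:ℝ) ≤ (1-t)/2) (by ring)
  have P2 := cvx k3 k4 (by linarith : (0:ℝ) ≤ (1+t)/2) (by linarith : (0:ℝ) ≤ (1-t)/2) (by ring)
  have P := cvx P1 P2 (by linarith : (0:ℝ) ≤ (1+s)/2) (by linarith : (0:ℝ) ≤ (1-s)/2) (by ring)
  convert P using 1
  refine Prod.ext ?_ (Prod.ext ?_ (Prod.ext ?_ ?_)) <;>
    · funext p
      try funext q
      simp only [Prod.smul_mk, Prod.mk_add_mk, Prod.fst_add, Prod.snd_add, Prod.smul_fst,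
        Prod.smul_snd, Pi.add_apply, Pi.smul_apply, Pi.neg_apply, smul_eq_mul,
        Matrix.add_apply, Matrix.smul_apply, Matrix.zero_apply, Pi.zero_apply]
      dsimp -failIfUnchanged only [HSMul.hSMul, SMul.smul]
      ring

lemma hullM1 (u b : Fin n → ℝ) (hu : ∑ i, (u i)^2 = 1) (hb : ∑ i, (b i)^2 = 1) :
    ((0, 0, (fun i j => u i * u j - b i * b j : Matrix (Fin n) (Fin n) ℝ),
      (0 : Matrix (Fin n) (Fin n) ℝ)) : Vn n) ∈ convexHull ℝ (KS n) := by
  have cvx := convex_convexHull ℝ (KS n)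
  have k1 := subset_convexHull ℝ (KS n) (mem_KS u b hu hb)
  have k2 := subset_convexHull ℝ (KS n) (mem_KS u (-b) hu (neg_unit b hb))
  have k3 := subset_convexHull ℝ (KS n) (mem_KS (-u) b (neg_unit u hu) hb)
  have k4 := subset_convexHull ℝ (KS n) (mem_KS (-u) (-b) (neg_unit u hu) (neg_unit b hb))
  have P1 := cvx k1 k2 (by norm_num : (0:ℝ) ≤ 1/2) (by norm_num : (0:ℝ) ≤ 1/2) (by ring)
  have P2 := cvx k3 k4 (by norm_num : (0:ℝ) ≤ 1/2) (by norm_num : (0:ℝ) ≤ 1/2) (by ring)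
  have P := cvx P1 P2 (by norm_num : (0:ℝ) ≤ 1/2) (by norm_num : (0:ℝ) ≤ 1/2) (by ring)
  convert P using 1
  refine Prod.ext ?_ (Prod.ext ?_ (Prod.ext ?_ ?_)) <;>
    · funext p
      try funext q
      simp only [Prod.smul_mk, Prod.mk_add_mk, Prod.fst_add, Prod.snd_add, Prod.smul_fst,
        Prod.smul_snd, Pi.add_apply, Pi.smul_apply, Pi.neg_apply, smul_eq_mul,
        Matrix.add_apply, Matrix.smul_apply, Matrix.zero_apply, Pi.zero_apply]
      dsimp -failIfUnchanged only [HSMul.hSMul, SMul.smul]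
      ring

lemma hullM (u b : Fin n → ℝ) (hu : ∑ i, (u i)^2 = 1) (hb : ∑ i, (b i)^2 = 1)
    (c : ℝ) (hc : |c| ≤ 1) :
    ((0, 0, c • (fun i j => u i * u j - b i * b j : Matrix (Fin n) (Fin n) ℝ),
      (0 : Matrix (Fin n) (Fin n) ℝ)) : Vn n) ∈ convexHull ℝ (KS n) := by
  have hc' := abs_le.1 hc
  have cvx := convex_convexHull ℝ (KS n)
  have P := cvx (hullM1 u b hu hb) (hullM1 b u hb hu)
    (by linarith : (0:ℝ) ≤ (1+c)/2) (by linarith : (0:ℝ) ≤ (1-c)/2) (by ring)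
  convert P using 1
  refine Prod.ext ?_ (Prod.ext ?_ (Prod.ext ?_ ?_)) <;>
    · funext p
      try funext q
      simp only [Prod.smul_mk, Prod.mk_add_mk, Prod.fst_add, Prod.snd_add, Prod.smul_fst,
        Prod.smul_snd, Pi.add_apply, Pi.smul_apply, Pi.neg_apply, smul_eq_mul,
        Matrix.add_apply, Matrix.smul_apply, Matrix.zero_apply, Pi.zero_apply]
      dsimp -failIfUnchanged only [HSMul.hSMul, SMul.smul]
      ring

lemma hullQ1 (u b : Fin n → ℝ) (hu : ∑ i, (u i)^2 = 1) (hb : ∑ i, (b i)^2 = 1) :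
    ((0, 0, (0 : Matrix (Fin n) (Fin n) ℝ),
      (fun i j => b i * u j - u i * b j : Matrix (Fin n) (Fin n) ℝ)) : Vn n) ∈ convexHull ℝ (KS n) := by
  have cvx := convex_convexHull ℝ (KS n)
  have k1 := subset_convexHull ℝ (KS n) (mem_KS u b hu hb)
  have k2 := subset_convexHull ℝ (KS n) (mem_KS (-u) (-b) (neg_unit u hu) (neg_unit b hb))
  have k3 := subset_convexHull ℝ (KS n) (mem_KS b (-u) hb (neg_unit u hu))
  have k4 := subset_convexHull ℝ (KS n) (mem_KS (-b) u (neg_unit b hb) hu)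
  have P1 := cvx k1 k2 (by norm_num : (0:ℝ) ≤ 1/2) (by norm_num : (0:ℝ) ≤ 1/2) (by ring)
  have P2 := cvx k3 k4 (by norm_num : (0:ℝ) ≤ 1/2) (by norm_num : (0:ℝ) ≤ 1/2) (by ring)
  have P := cvx P1 P2 (by norm_num : (0:ℝ) ≤ 1/2) (by norm_num : (0:ℝ) ≤ 1/2) (by ring)
  convert P using 1
  refine Prod.ext ?_ (Prod.ext ?_ (Prod.ext ?_ ?_)) <;>
    · funext p
      try funext q
      simp only [Prod.smul_mk, Prod.mk_add_mk, Prod.fst_add, Prod.snd_add, Prod.smul_fst,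
        Prod.smul_snd, Pi.add_apply, Pi.smul_apply, Pi.neg_apply, smul_eq_mul,
        Matrix.add_apply, Matrix.smul_apply, Matrix.zero_apply, Pi.zero_apply]
      dsimp -failIfUnchanged only [HSMul.hSMul, SMul.smul]
      ring

lemma hullQ (u b : Fin n → ℝ) (hu : ∑ i, (u i)^2 = 1) (hb : ∑ i, (b i)^2 = 1)
    (c : ℝ) (hc : |c| ≤ 1) :
    ((0, 0, (0 : Matrix (Fin n) (Fin n) ℝ),
      c • (fun i j => b i * u j - u i * b j : Matrix (Fin n) (Fin n) ℝ)) : Vn n)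
      ∈ convexHull ℝ (KS n) := by
  have hc' := abs_le.1 hc
  have cvx := convex_convexHull ℝ (KS n)
  have P := cvx (hullQ1 u b hu hb) (hullQ1 b u hb hu)
    (by linarith : (0:ℝ) ≤ (1+c)/2) (by linarith : (0:ℝ) ≤ (1-c)/2) (by ring)
  convert P using 1
  refine Prod.ext ?_ (Prod.ext ?_ (Prod.ext ?_ ?_)) <;>
    · funext p
      try funext q
      simp only [Prod.smul_mk, Prod.mk_add_mk, Prod.fst_add, Prod.snd_add, Prod.smul_fst,
        Prod.smul_snd, Pi.add_apply, Pi.smul_apply, Pi.neg_apply, smul_eq_mul,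
        Matrix.add_apply, Matrix.smul_apply, Matrix.zero_apply, Pi.zero_apply]
      dsimp -failIfUnchanged only [HSMul.hSMul, SMul.smul]
      ring

/-! Basis vectors and delta computations. -/

def ee (n : ℕ) (i : Fin n) : Fin n → ℝ := fun k => if k = i then 1 else 0
noncomputable def rr : ℝ := Real.sqrt (1/2)
noncomputable def sv (n : ℕ) (i j : Fin n) : Fin n → ℝ :=
  fun k => if k = i then rr else if k = j then rr else 0
noncomputable def sw (n : ℕ) (i j : Fin n) : Fin n → ℝ :=
  fun k => if k = i then rr else if k = j then -rr else 0

lemma rr_sq : rr ^ 2 = 1/2 := Real.sq_sqrt (by norm_num)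

lemma ee_unit (i : Fin n) : ∑ k, (ee n i k)^2 = 1 := by
  simp [ee, apply_ite (· ^ (2:ℕ))]

lemma sv_unit {i j : Fin n} (h : i ≠ j) : ∑ k, (sv n i j k)^2 = 1 := by
  have : ∀ k, (sv n i j k)^2 = (if k = i then rr^2 else 0) + (if k = j then rr^2 else 0) := by
    intro k
    by_cases h1 : k = i <;> by_cases h2 : k = j <;> simp_all [sv]
  rw [Finset.sum_congr rfl fun k _ => this k, Finset.sum_add_distrib]
  simp [rr_sq]
  norm_num

lemma sw_unit {i j : Fin n} (h : i ≠ j) : ∑ k, (sw n i j k)^2 = 1 := by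
  have : ∀ k, (sw n i j k)^2 = (if k = i then rr^2 else 0) + (if k = j then rr^2 else 0) := by
    intro k
    by_cases h1 : k = i <;> by_cases h2 : k = j <;> simp_all [sw]
  rw [Finset.sum_congr rfl fun k _ => this k, Finset.sum_add_distrib]
  simp [rr_sq]
  norm_num

lemma sgen_entry {i j : Fin n} (h : i ≠ j) (p q : Fin n) :
    sv n i j p * sv n i j q - sw n i j p * sw n i j q
      = ee n i p * ee n j q + ee n j p * ee n i q := by
  have h2 : rr * rr = 1/2 := by nlinarith [rr_sq]
  by_cases h1 : p = i <;> by_cases h2' : p = j <;> by_cases h3 : q = i <;> by_cases h4 : q = j <;>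
    simp_all [sv, sw, ee] <;> ring

lemma sumE (u : Fin n → ℝ) (x : Fin n) : ∑ i, u i * ee n i x = u x := by
  simp [ee, mul_ite, Finset.sum_ite_eq]

lemma ee_mul (x y i : Fin n) :
    ee n i x * ee n i y = if x = i then (if y = i then (1:ℝ) else 0) else 0 := by
  simp only [ee, ite_mul, mul_ite, one_mul, mul_one, zero_mul, mul_zero]
  split_ifs <;> rfl

lemma delta_sum (x y : Fin n) : ∑ i, ee n i x * ee n i y = if x = y then (1:ℝ) else 0 := by
  simp only [ee_mul]
  rw [Finset.sum_ite_eq]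
  simp [eq_comm]

lemma double_delta (f : Fin n → Fin n → ℝ) (p q : Fin n) :
    ∑ i, ∑ j, f i j * (ee n i p * ee n j q) = f p q := by
  simp [ee, mul_ite, Finset.sum_ite_eq]

lemma double_delta' (f : Fin n → Fin n → ℝ) (p q : Fin n) :
    ∑ i, ∑ j, f i j * (ee n j p * ee n i q) = f q p := by
  simp [ee, mul_ite, Finset.sum_ite_eq]

lemma sum_diag_delta (f : Fin n → ℝ) (p q : Fin n) :
    ∑ i, f i * (ee n i p * ee n i q) = if p = q then f p else 0 := by
  have e1 : ∀ i, f i * (ee n i p * ee n i q)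
      = if p = i then (if q = i then f i else 0) else 0 := by
    intro i
    rw [ee_mul]
    split_ifs <;> ring
  rw [Finset.sum_congr rfl fun i _ => e1 i, Finset.sum_ite_eq]
  simp only [mem_univ, if_true]
  by_cases h : p = q
  · subst h; simp
  · simp only [if_neg h, if_neg (fun h' : q = p => h h'.symm)]

lemma sumD (hn : 0 < n) (M : Matrix (Fin n) (Fin n) ℝ) (htr : ∑ i, M i i = 0) (p q : Fin n) :
    ∑ i, ∑ j, (M i i / n) * (ee n i p * ee n i q - ee n j p * ee n j q)
      = if p = q then M p p else 0 := by
  have hne : (n : ℝ) ≠ 0 := by positivity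
  have step : ∀ i : Fin n,
      ∑ j, (M i i / n) * (ee n i p * ee n i q - ee n j p * ee n j q)
        = n * ((M i i / n) * (ee n i p * ee n i q)) - (M i i / n) * (if p = q then 1 else 0) := by
    intro i
    rw [Finset.sum_congr rfl (fun j _ => mul_sub (M i i / n) _ _), Finset.sum_sub_distrib,
      Finset.sum_const, ← Finset.mul_sum, delta_sum]
    simp [card_univ, nsmul_eq_mul]
  rw [Finset.sum_congr rfl fun i _ => step i, Finset.sum_sub_distrib]
  have t1 : ∑ i, (n:ℝ) * ((M i i / n) * (ee n i p * ee n i q))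
      = if p = q then M p p else 0 := by
    have e1 : ∀ i : Fin n, (n:ℝ) * ((M i i / n) * (ee n i p * ee n i q))
        = if p = i then (if q = i then M i i else 0) else 0 := by
      intro i
      rw [ee_mul]
      split_ifs <;> field_simp <;> simp
    rw [Finset.sum_congr rfl fun i _ => e1 i, Finset.sum_ite_eq]
    simp only [mem_univ, if_true]
    by_cases h : p = q
    · subst h; simp
    · simp only [if_neg h, if_neg (fun h' : q = p => h h'.symm)]
  have t2 : ∑ i, (M i i / n) * (if p = q then (1:ℝ) else 0) = 0 := by
    rw [← Finset.sum_mul, ← Finset.sum_div, htr]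
    simp
  rw [t1, t2, sub_zero]

lemma sumS (M : Matrix (Fin n) (Fin n) ℝ) (hM : ∀ i j, M i j = M j i) (p q : Fin n) :
    ∑ i, ∑ j, (if i = j then (0:ℝ)
        else (M i j / 2) * (ee n i p * ee n j q + ee n j p * ee n i q))
      = M p q - (if p = q then M p p else 0) := by
  have e1 : ∀ i j : Fin n, (if i = j then (0:ℝ)
        else (M i j / 2) * (ee n i p * ee n j q + ee n j p * ee n i q))
      = (M i j / 2) * (ee n i p * ee n j q) + (M i j / 2) * (ee n j p * ee n i q)
        - (if i = j then (M i j) * (ee n i p * ee n i q) else 0) := by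
    intro i j
    split_ifs with h
    · subst h; ring
    · ring
  rw [Finset.sum_congr rfl fun i _ => Finset.sum_congr rfl fun j _ => e1 i j]
  simp only [Finset.sum_sub_distrib, Finset.sum_add_distrib]
  rw [double_delta (fun i j => M i j / 2), double_delta' (fun i j => M i j / 2)]
  have e2 : ∀ i : Fin n, ∑ j, (if i = j then M i j * (ee n i p * ee n i q) else 0)
      = M i i * (ee n i p * ee n i q) := by
    intro i
    rw [Finset.sum_ite_eq]
    simp
  rw [Finset.sum_congr rfl fun i _ => e2 i, sum_diag_delta (fun i => M i i)]
  rw [hM q p]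
  ring

lemma sumA (Q : Matrix (Fin n) (Fin n) ℝ) (hQ : ∀ i j, Q i j = - Q j i) (p q : Fin n) :
    ∑ i, ∑ j, (Q j i / 2) * (ee n j p * ee n i q - ee n i p * ee n j q) = Q p q := by
  have e1 : ∀ i j : Fin n, (Q j i / 2) * (ee n j p * ee n i q - ee n i p * ee n j q)
      = (Q j i / 2) * (ee n j p * ee n i q) - (Q j i / 2) * (ee n i p * ee n j q) := by
    intro i j; ring
  rw [Finset.sum_congr rfl fun i _ => Finset.sum_congr rfl fun j _ => e1 i j]
  simp only [Finset.sum_sub_distrib]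
  rw [double_delta (fun i j => Q j i / 2), double_delta' (fun i j => Q j i / 2)]
  rw [hQ q p]
  ring

/-! The generator family. -/

abbrev Ign (n : ℕ) := Fin n ⊕ Fin n ⊕ (Fin n × Fin n) ⊕ (Fin n × Fin n) ⊕ (Fin n × Fin n)

noncomputable def pgen (n : ℕ) (N : ℝ) (u b : Fin n → ℝ) (M Q : Matrix (Fin n) (Fin n) ℝ) :
    Ign n → Vn n :=
  Sum.elim (fun i => ((N * u i) • ee n i, 0, 0, 0))
  (Sum.elim (fun i => (0, (N * b i) • ee n i, 0, 0))
  (Sum.elim (fun ij => (0, 0, (N * M ij.1 ij.1 / n) •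
      (fun p q => ee n ij.1 p * ee n ij.1 q - ee n ij.2 p * ee n ij.2 q :
        Matrix (Fin n) (Fin n) ℝ), 0))
  (Sum.elim (fun ij => (0, 0, (if ij.1 = ij.2 then 0 else N * M ij.1 ij.2 / 2) •
      (fun p q => sv n ij.1 ij.2 p * sv n ij.1 ij.2 q - sw n ij.1 ij.2 p * sw n ij.1 ij.2 q :
        Matrix (Fin n) (Fin n) ℝ), 0))
  (fun ij => (0, 0, 0, (N * Q ij.2 ij.1 / 2) •
      (fun p q => ee n ij.2 p * ee n ij.1 q - ee n ij.1 p * ee n ij.2 q :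
        Matrix (Fin n) (Fin n) ℝ))))))

lemma pgen_mem (hn : 0 < n) (N : ℝ) (hN : 1 ≤ N) (u b : Fin n → ℝ)
    (M Q : Matrix (Fin n) (Fin n) ℝ)
    (hu : ∀ i, |u i| ≤ 1 / (2*N)) (hb : ∀ i, |b i| ≤ 1 / (2*N))
    (hMe : ∀ i j, |M i j| ≤ 1 / (2*N)) (hQe : ∀ i j, |Q i j| ≤ 1 / (2*N)) :
    ∀ k, pgen n N u b M Q k ∈ convexHull ℝ (KS n) := by
  have hN0 : (0:ℝ) < N := by linarith
  have key : ∀ x : ℝ, |x| ≤ 1/(2*N) → |N * x| ≤ 1 := by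
    intro x hx
    rw [abs_mul, abs_of_pos hN0]
    rw [le_div_iff₀ (by linarith : (0:ℝ) < 2*N)] at hx
    nlinarith [abs_nonneg x]
  have hn1 : (1:ℝ) ≤ n := by exact_mod_cast hn
  rintro (i | i | ⟨i, j⟩ | ⟨i, j⟩ | ⟨i, j⟩)
  · simpa [pgen] using hullUB (ee n i) (ee_unit i) (N * u i) 0 (key _ (hu i)) (by simp)
  · simpa [pgen] using hullUB (ee n i) (ee_unit i) 0 (N * b i) (by simp) (key _ (hb i))
  · exact hullM (ee n i) (ee n j) (ee_unit i) (ee_unit j) (N * M i i / n)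
      (by
        rw [abs_div, abs_of_pos (by positivity : (0:ℝ) < (n:ℝ))]
        have := key _ (hMe i i)
        rw [div_le_one (by positivity)]
        nlinarith)
  · show ((0, 0, (if i = j then 0 else N * M i j / 2) •
      (fun p q => sv n i j p * sv n i j q - sw n i j p * sw n i j q :
        Matrix (Fin n) (Fin n) ℝ), 0) : Vn n) ∈ convexHull ℝ (KS n)
    by_cases h : i = j
    · rw [if_pos h, zero_smul]
      simpa using hullM (ee n i) (ee n i) (ee_unit i) (ee_unit i) 0 (by simp)
    · rw [if_neg h]
      exact hullM (sv n i j) (sw n i j) (sv_unit h) (sw_unit h) (N * M i j / 2)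
        (by
          rw [abs_div]
          have := key _ (hMe i j)
          rw [div_le_one (by norm_num)]
          simp only [abs_two]
          nlinarith)
  · exact hullQ (ee n i) (ee n j) (ee_unit i) (ee_unit j) (N * Q j i / 2)
      (by
        rw [abs_div]
        have := key _ (hQe j i)
        rw [div_le_one (by norm_num)]
        simp only [abs_two]
        nlinarith)

lemma pgen_sum (hn : 0 < n) {N : ℝ} (hN : N ≠ 0) (u b : Fin n → ℝ)
    (M Q : Matrix (Fin n) (Fin n) ℝ) (hM : ∀ i j, M i j = M j i) (htr : ∑ i, M i i = 0)
    (hQ : ∀ i j, Q i j = - Q j i) :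
    ∑ k : Ign n, (1/N) • pgen n N u b M Q k = (u, b, M, Q) := by
  have hnne : (n:ℝ) ≠ 0 := by positivity
  refine Prod.ext ?_ (Prod.ext ?_ (Prod.ext ?_ ?_))
  · rw [Prod.fst_sum]
    simp only [pgen, Fintype.sum_sum_type, Sum.elim_inl, Sum.elim_inr, Prod.smul_fst,
      smul_zero, Finset.sum_const_zero, add_zero, zero_add]
    have e1 : ∀ i : Fin n, (1/N) • ((N * u i) • ee n i) = u i • ee n i := by
      intro i
      rw [smul_smul]
      congr 1
      field_simp
    rw [Finset.sum_congr rfl fun i _ => e1 i]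
    funext x
    rw [Finset.sum_apply]
    simp only [Pi.smul_apply, smul_eq_mul]
    exact sumE u x
  · rw [Prod.snd_sum, Prod.fst_sum]
    simp only [pgen, Fintype.sum_sum_type, Sum.elim_inl, Sum.elim_inr, Prod.smul_snd,
      Prod.smul_fst, smul_zero, Finset.sum_const_zero, add_zero, zero_add]
    have e1 : ∀ i : Fin n, (1/N) • ((N * b i) • ee n i) = b i • ee n i := by
      intro i
      rw [smul_smul]
      congr 1
      field_simp
    rw [Finset.sum_congr rfl fun i _ => e1 i]
    funext x
    rw [Finset.sum_apply]
    simp only [Pi.smul_apply, smul_eq_mul]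
    exact sumE b x
  · rw [Prod.snd_sum, Prod.snd_sum, Prod.fst_sum]
    simp only [pgen, Fintype.sum_sum_type, Sum.elim_inl, Sum.elim_inr, Prod.smul_snd,
      Prod.smul_fst, smul_zero, Finset.sum_const_zero, add_zero, zero_add]
    funext p q
    simp only [Matrix.add_apply, Matrix.sum_apply, Matrix.smul_apply, Pi.smul_apply,
      smul_eq_mul, Fintype.sum_prod_type]
    dsimp only [HSMul.hSMul, SMul.smul]
    simp only [show ∀ a b : ℝ, Mul.mul a b = a * b from fun _ _ => rfl]
    have eD : ∀ i j : Fin n,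
        (1/N) * ((N * M i i / n) * (ee n i p * ee n i q - ee n j p * ee n j q))
          = (M i i / n) * (ee n i p * ee n i q - ee n j p * ee n j q) := by
      intro i j
      rw [← mul_assoc]
      congr 1
      field_simp
    have eS : ∀ i j : Fin n,
        (1/N) * ((if i = j then 0 else N * M i j / 2) *
            (sv n i j p * sv n i j q - sw n i j p * sw n i j q))
          = (if i = j then (0:ℝ)
              else (M i j / 2) * (ee n i p * ee n j q + ee n j p * ee n i q)) := by
      intro i j
      by_cases h : i = j
      · simp [h]
      · rw [if_neg h, if_neg h, sgen_entry h, ← mul_assoc]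
        congr 1
        field_simp
    rw [Finset.sum_congr rfl fun i _ => Finset.sum_congr rfl fun j _ => eD i j,
      Finset.sum_congr rfl fun i _ => Finset.sum_congr rfl fun j _ => eS i j,
      sumD hn M htr p q, sumS M hM p q]
    ring
  · rw [Prod.snd_sum, Prod.snd_sum, Prod.snd_sum]
    simp only [pgen, Fintype.sum_sum_type, Sum.elim_inl, Sum.elim_inr, Prod.smul_snd,
      smul_zero, Finset.sum_const_zero, add_zero, zero_add]
    funext p q
    simp only [Matrix.sum_apply, Matrix.smul_apply, Pi.smul_apply, smul_eq_mul,
      Fintype.sum_prod_type]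
    dsimp only [HSMul.hSMul, SMul.smul]
    simp only [show ∀ a b : ℝ, Mul.mul a b = a * b from fun _ _ => rfl]
    have eA : ∀ i j : Fin n,
        (1/N) * ((N * Q j i / 2) * (ee n j p * ee n i q - ee n i p * ee n j q))
          = (Q j i / 2) * (ee n j p * ee n i q - ee n i p * ee n j q) := by
      intro i j
      rw [← mul_assoc]
      congr 1
      field_simp
    rw [Finset.sum_congr rfl fun i _ => Finset.sum_congr rfl fun j _ => eA i j,
      sumA Q hQ p q]

end MHDHelpers

/-- **Lemma 3.1.** For `n ≥ 2`, the origin lies in the interior, relative to the space `V` of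
quadruples `(u,b,M,Q)` with `M` trace-free symmetric and `Q` skew-symmetric, of the convex
hull of the constitutive set
`K = {(u,b,M,Q) : |u| = |b| = 1, M = u ⊗ u − b ⊗ b, Q = b ⊗ u − u ⊗ b}`:
there is `ε > 0` such that every such quadruple of Euclidean norm `< ε` belongs to the
convex hull of `K`. -/
theorem zero_mem_relative_interior_convexHull_K (n : ℕ) (hn : 2 ≤ n) :
    ∃ ε : ℝ, 0 < ε ∧
      ∀ (u b : Fin n → ℝ) (M Q : Matrix (Fin n) (Fin n) ℝ),
        (∀ i j, M i j = M j i) → (∑ i, M i i) = 0 →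
        (∀ i j, Q i j = - Q j i) →
        ((∑ i, (u i) ^ 2) + (∑ i, (b i) ^ 2)
          + (∑ i, ∑ j, (M i j) ^ 2) + (∑ i, ∑ j, (Q i j) ^ 2)) < ε ^ 2 →
        (u, b, M, Q) ∈ convexHull ℝ
          {z : (Fin n → ℝ) × (Fin n → ℝ) ×
              Matrix (Fin n) (Fin n) ℝ × Matrix (Fin n) (Fin n) ℝ |
            (∑ i, (z.1 i) ^ 2) = 1 ∧ (∑ i, (z.2.1 i) ^ 2) = 1 ∧
            (∀ i j, z.2.2.1 i j = z.1 i * z.1 j - z.2.1 i * z.2.1 j) ∧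
            (∀ i j, z.2.2.2 i j = z.2.1 i * z.1 j - z.1 i * z.2.1 j)} := by
  have hn0 : 0 < n := by omega
  have hn2 : (2:ℝ) ≤ (n:ℝ) := by exact_mod_cast hn
  set N : ℝ := 3*(n:ℝ)^2 + 2*(n:ℝ) with hNdef
  have hN1 : (1:ℝ) ≤ N := by nlinarith
  have hN0 : (0:ℝ) < N := by linarith
  have hNne : N ≠ 0 := ne_of_gt hN0
  refine ⟨1/(2*N), by positivity, ?_⟩
  intro u b M Q hM htr hQ hnorm
  set ε : ℝ := 1/(2*N) with hεdef
  have hε : 0 < ε := by positivity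
  have habs : ∀ x : ℝ, x^2 < ε^2 → |x| ≤ ε := by
    intro x hx
    nlinarith [sq_abs x, abs_nonneg x]
  have h1 : 0 ≤ ∑ i, (u i)^2 := Finset.sum_nonneg fun i _ => sq_nonneg _
  have h2 : 0 ≤ ∑ i, (b i)^2 := Finset.sum_nonneg fun i _ => sq_nonneg _
  have h3 : 0 ≤ ∑ i, ∑ j, (M i j)^2 :=
    Finset.sum_nonneg fun i _ => Finset.sum_nonneg fun j _ => sq_nonneg _
  have h4 : 0 ≤ ∑ i, ∑ j, (Q i j)^2 :=
    Finset.sum_nonneg fun i _ => Finset.sum_nonneg fun j _ => sq_nonneg _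
  have hu' : ∀ i, |u i| ≤ ε := by
    intro i
    refine habs _ (lt_of_le_of_lt ?_ hnorm)
    have h := Finset.single_le_sum (f := fun i => (u i)^2) (fun i _ => sq_nonneg _) (mem_univ i)
    replace h : (u i)^2 ≤ ∑ x, (u x)^2 := h
    linarith
  have hb' : ∀ i, |b i| ≤ ε := by
    intro i
    refine habs _ (lt_of_le_of_lt ?_ hnorm)
    have h := Finset.single_le_sum (f := fun i => (b i)^2) (fun i _ => sq_nonneg _) (mem_univ i)
    replace h : (b i)^2 ≤ ∑ x, (b x)^2 := h
    linarith
  have hM' : ∀ i j, |M i j| ≤ ε := by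
    intro i j
    refine habs _ (lt_of_le_of_lt ?_ hnorm)
    have e1 := Finset.single_le_sum (f := fun j => (M i j)^2) (fun j _ => sq_nonneg _) (mem_univ j)
    have e2 := Finset.single_le_sum (f := fun i => ∑ j, (M i j)^2)
      (fun i _ => Finset.sum_nonneg fun j _ => sq_nonneg _) (mem_univ i)
    replace e1 : (M i j)^2 ≤ ∑ x, (M i x)^2 := e1
    replace e2 : ∑ x, (M i x)^2 ≤ ∑ y, ∑ x, (M y x)^2 := e2
    linarith
  have hQ' : ∀ i j, |Q i j| ≤ ε := by
    intro i j
    refine habs _ (lt_of_le_of_lt ?_ hnorm)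
    have e1 := Finset.single_le_sum (f := fun j => (Q i j)^2) (fun j _ => sq_nonneg _) (mem_univ j)
    have e2 := Finset.single_le_sum (f := fun i => ∑ j, (Q i j)^2)
      (fun i _ => Finset.sum_nonneg fun j _ => sq_nonneg _) (mem_univ i)
    replace e1 : (Q i j)^2 ≤ ∑ x, (Q i x)^2 := e1
    replace e2 : ∑ x, (Q i x)^2 ≤ ∑ y, ∑ x, (Q y x)^2 := e2
    linarith
  have hmem := pgen_mem hn0 N hN1 u b M Q hu' hb' hM' hQ'
  have hsum := pgen_sum hn0 hNne u b M Q hM htr hQ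
  show (u, b, M, Q) ∈ convexHull ℝ (KS n)
  rw [← hsum]
  refine (convex_convexHull ℝ (KS n)).sum_mem (fun k _ => by positivity) ?_ (fun k _ => hmem k)
  rw [Finset.sum_const, card_univ, nsmul_eq_mul]
  have hcard : (Fintype.card (Ign n) : ℝ) = N := by
    simp only [Ign, Fintype.card_sum, Fintype.card_prod, Fintype.card_fin]
    push_cast
    ring
  rw [hcard]
  field_simp
end

section
/- Let n ≥ 4. Let V denote the real vector space of quadruples (u,b,M,Q) where u,b ∈ ℝⁿ, M is trace-free symmetric n×n, and Q is skew-symmetric n×n; let K ⊂ V be the set of such quadruples with |u| = |b| = 1, M = u ⊗ u − b ⊗ b, Q = b ⊗ u − u ⊗ b; let K^co be the convex hull of K, and let 𝒰 be the interior, relative to V × ℝ, of K^co × [−1,1]. Let Λ be the wave cone: the set of (u,b,M,Q,q) ∈ V × ℝ for which there exists (ζ,s) ∈ ℝⁿ × ℝ with (ζ,s) ≠ 0 such that (M + q Iₙ)ζ + s u = 0, u · ζ = 0, Qζ + s b = 0, and b · ζ = 0. Then for every m ∈ (1,∞) there exists a constant C₀ > 0, depending only on n and m, such that for every z = (u,b,M,Q,q)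 ∈ 𝒰 there exists z̄ = (ū,b̄,M̄,Q̄,0) ∈ Λ with z̄ ≠ 0 satisfying: (i) the segment σ = { z + s z̄ : |s| ≤ 1 } is contained in 𝒰 and dist(σ, ∂𝒰) ≥ (1/2) dist(z, ∂𝒰) (i.e. 𝒰 has 1/2-relaxed local convexity at z in the wave-cone direction z̄); (ii) for every ε ∈ (0,1), ε^{m−1} ( 2 − |u|^m − |b|^m ) ≤ C₀ |(ū,b̄)|^m + 2 ε^m. -/
open MeasureTheory

/-- The state space: quadruples `(u, b, M, Q)` with matrices recorded as elements of
`EuclideanSpace ℝ (Fin n × Fin n)` (Frobenius norm). -/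
abbrev MHDState (n : ℕ) :=
  (EuclideanSpace ℝ (Fin n)) × (EuclideanSpace ℝ (Fin n)) ×
    (EuclideanSpace ℝ (Fin n × Fin n)) × (EuclideanSpace ℝ (Fin n × Fin n))

/-- Membership in the linear space `V`: `M` symmetric trace-free, `Q` skew-symmetric. -/
def MHDInV (n : ℕ) (z : MHDState n) : Prop :=
  (∀ i j, z.2.2.1 (i, j) = z.2.2.1 (j, i)) ∧ (∑ i, z.2.2.1 (i, i)) = 0 ∧
  (∀ i j, z.2.2.2 (i, j) = - z.2.2.2 (j, i))

/-- The constitutive set `K`. -/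
def MHDK (n : ℕ) : Set (MHDState n) :=
  {z | ‖z.1‖ = 1 ∧ ‖z.2.1‖ = 1 ∧
    (∀ i j, z.2.2.1 (i, j) = z.1 i * z.1 j - z.2.1 i * z.2.1 j) ∧
    (∀ i j, z.2.2.2 (i, j) = z.2.1 i * z.1 j - z.1 i * z.2.1 j)}

/-- The relaxed set `𝒰`: the interior, relative to `V × ℝ`, of `K^co × [-1,1]`. -/
def MHDU (n : ℕ) : Set (MHDState n × ℝ) :=
  {z | MHDInV n z.1 ∧ ∃ ρ : ℝ, 0 < ρ ∧ ∀ w : MHDState n × ℝ, MHDInV n w.1 →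
    ‖w - z‖ < ρ → w.1 ∈ convexHull ℝ (MHDK n) ∧ w.2 ∈ Set.Icc (-1 : ℝ) 1}

/-- The relative boundary `∂𝒰` of `𝒰` inside `V × ℝ` (for points of `𝒰`, the distance to
`∂𝒰` is the distance to the relative complement of `𝒰`). -/
def MHDBdry (n : ℕ) : Set (MHDState n × ℝ) :=
  {w | MHDInV n w.1} \ MHDU n

/-- The wave cone `Λ`: states annihilated by some nonzero `(ζ, s) ∈ ℝⁿ × ℝ`. -/
def MHDLambda (n : ℕ) (z : MHDState n × ℝ) : Prop :=
  ∃ (ζ : EuclideanSpace ℝ (Fin n)) (s : ℝ), ¬ (ζ = 0 ∧ s = 0) ∧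
    (∀ i, (∑ j, (z.1.2.2.1 (i, j) + z.2 * (if i = j then (1 : ℝ) else 0)) * ζ j)
      + s * z.1.1 i = 0) ∧
    (∑ i, z.1.1 i * ζ i) = 0 ∧
    (∀ i, (∑ j, z.1.2.2.2 (i, j) * ζ j) + s * z.1.2.1 i = 0) ∧
    (∑ i, z.1.2.1 i * ζ i) = 0


lemma sqrt2_low {a b : ℝ} (ha : 0 ≤ a) (hb : 0 ≤ b) :
    a + b ≤ Real.sqrt 2 * Real.sqrt (a ^ 2 + b ^ 2) := by
  have h1 : (a + b) ^ 2 ≤ 2 * (a ^ 2 + b ^ 2) := by nlinarith [sq_nonneg (a - b)]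
  have h2 : a + b = Real.sqrt ((a + b) ^ 2) := (Real.sqrt_sq (by linarith)).symm
  rw [h2, ← Real.sqrt_mul (by norm_num : (0:ℝ) ≤ 2)]
  exact Real.sqrt_le_sqrt h1

lemma eps_ineq (m : ℝ) (hm : 1 < m) (Kc A Bq ε : ℝ) (hKc : 0 < Kc) (hBq : 0 ≤ Bq)
    (hAB : A ≤ Kc * Bq) (hε : 0 < ε) :
    ε ^ (m - 1) * A ≤ 2 * (Kc / 2) ^ m * Bq ^ m + 2 * ε ^ m := by
  rcases le_or_gt A (2 * ε) with hcase | hcase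
  · have h1 : (0:ℝ) ≤ ε ^ (m - 1) := Real.rpow_nonneg hε.le _
    have h2 : ε ^ (m-1) * A ≤ ε ^ (m-1) * (2 * ε) := mul_le_mul_of_nonneg_left hcase h1
    have h3 : ε ^ (m-1) * ε = ε ^ m := by
      calc ε ^ (m-1) * ε = ε ^ (m-1) * ε ^ (1:ℝ) := by rw [Real.rpow_one]
        _ = ε ^ ((m-1) + 1) := (Real.rpow_add hε _ _).symm
        _ = ε ^ m := by norm_num
    have h4 : (0:ℝ) ≤ 2 * (Kc/2) ^ m * Bq ^ m := by
      have hkk := Real.rpow_nonneg (by positivity : (0:ℝ) ≤ Kc/2) m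
      have hbb := Real.rpow_nonneg hBq m
      positivity
    calc ε ^ (m-1) * A ≤ ε ^ (m-1) * (2 * ε) := h2
      _ = 2 * (ε ^ (m-1) * ε) := by ring
      _ = 2 * ε ^ m := by rw [h3]
      _ ≤ 2 * (Kc/2) ^ m * Bq ^ m + 2 * ε ^ m := by linarith
  · have hApos : (0:ℝ) < A := by linarith
    have hεA : ε ≤ A/2 := by linarith
    have h2 : ε ^ (m-1) ≤ (A/2) ^ (m-1) := Real.rpow_le_rpow hε.le hεA (by linarith)
    have h3 : ε ^ (m-1) * A ≤ (A/2) ^ (m-1) * A :=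
      mul_le_mul_of_nonneg_right h2 hApos.le
    have h4 : (A/2) ^ (m-1) * A = 2 * (A/2) ^ m := by
      have h5 : (A/2) ^ m = (A/2) ^ (m-1) * (A/2) := by
        calc (A/2) ^ m = (A/2) ^ ((m-1) + 1) := by norm_num
          _ = (A/2) ^ (m-1) * (A/2) ^ (1:ℝ) := Real.rpow_add (by linarith) _ _
          _ = (A/2) ^ (m-1) * (A/2) := by rw [Real.rpow_one]
      rw [h5]; ring
    have h6 : (A/2) ^ m ≤ ((Kc/2) * Bq) ^ m := by
      apply Real.rpow_le_rpow (by linarith) _ (by linarith)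
      calc A/2 ≤ (Kc * Bq)/2 := by linarith
        _ = (Kc/2) * Bq := by ring
    have h7 : ((Kc/2) * Bq) ^ m = (Kc/2) ^ m * Bq ^ m :=
      Real.mul_rpow (by positivity) hBq
    have h8 : (0:ℝ) ≤ ε ^ m := Real.rpow_nonneg hε.le _
    calc ε ^ (m-1) * A ≤ (A/2) ^ (m-1) * A := h3
      _ = 2 * (A/2) ^ m := h4
      _ ≤ 2 * ((Kc/2) ^ m * Bq ^ m) := by rw [← h7]; linarith [h6]
      _ = 2 * (Kc/2) ^ m * Bq ^ m := by ring
      _ ≤ 2 * (Kc/2) ^ m * Bq ^ m + 2 * ε ^ m := by linarith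

lemma mhdInV_comb (n : ℕ) (a b : ℝ) {x y : MHDState n} (hx : MHDInV n x) (hy : MHDInV n y) :
    MHDInV n (a • x + b • y) := by
  obtain ⟨hx1, hx2, hx3⟩ := hx
  obtain ⟨hy1, hy2, hy3⟩ := hy
  refine ⟨?_, ?_, ?_⟩
  · intro i j
    simp only [Prod.smul_snd, Prod.snd_add, Prod.smul_fst, Prod.fst_add, PiLp.add_apply, PiLp.smul_apply, smul_eq_mul]
    rw [hx1 i j, hy1 i j]
  · simp only [Prod.smul_snd, Prod.snd_add, Prod.smul_fst, Prod.fst_add, PiLp.add_apply, PiLp.smul_apply, smul_eq_mul]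
    rw [Finset.sum_add_distrib, ← Finset.mul_sum, ← Finset.mul_sum, hx2, hy2]
    ring
  · intro i j
    simp only [Prod.smul_snd, Prod.snd_add, Prod.smul_fst, Prod.fst_add, PiLp.add_apply, PiLp.smul_apply, smul_eq_mul]
    rw [hx3 i j, hy3 i j]
    ring

lemma mhdK_inV (n : ℕ) {x : MHDState n} (hx : x ∈ MHDK n) : MHDInV n x := by
  obtain ⟨hu, hb, hM, hQ⟩ := hx
  have hu2 : (∑ i, x.1 i * x.1 i) = 1 := by
    have := EuclideanSpace.norm_eq x.1
    rw [hu] at this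
    have h1 : Real.sqrt (∑ i, ‖x.1 i‖ ^ 2) = 1 := this.symm
    rw [Real.sqrt_eq_one] at h1
    calc (∑ i, x.1 i * x.1 i) = ∑ i, ‖x.1 i‖ ^ 2 := by
          apply Finset.sum_congr rfl; intro i _
          rw [Real.norm_eq_abs, sq_abs]; ring
      _ = 1 := h1
  have hb2 : (∑ i, x.2.1 i * x.2.1 i) = 1 := by
    have := EuclideanSpace.norm_eq x.2.1
    rw [hb] at this
    have h1 : Real.sqrt (∑ i, ‖x.2.1 i‖ ^ 2) = 1 := this.symm
    rw [Real.sqrt_eq_one] at h1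
    calc (∑ i, x.2.1 i * x.2.1 i) = ∑ i, ‖x.2.1 i‖ ^ 2 := by
          apply Finset.sum_congr rfl; intro i _
          rw [Real.norm_eq_abs, sq_abs]; ring
      _ = 1 := h1
  refine ⟨fun i j => by rw [hM i j, hM j i]; ring, ?_, fun i j => by rw [hQ i j, hQ j i]; ring⟩
  · have : (∑ i, x.2.2.1 (i, i)) = (∑ i, x.1 i * x.1 i) - (∑ i, x.2.1 i * x.2.1 i) := by
      rw [← Finset.sum_sub_distrib]
      exact Finset.sum_congr rfl fun i _ => hM i i
    rw [this, hu2, hb2]; ring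


lemma hull_norms (n : ℕ) {x : MHDState n} (hx : x ∈ convexHull ℝ (MHDK n)) :
    ‖x.1‖ ≤ 1 ∧ ‖x.2.1‖ ≤ 1 := by
  have hconv : Convex ℝ {y : MHDState n | ‖y.1‖ ≤ 1 ∧ ‖y.2.1‖ ≤ 1} := by
    intro p hp q hq a b ha hb hab
    constructor
    · simp only [Prod.fst_add, Prod.smul_fst]
      calc ‖a • p.1 + b • q.1‖ ≤ ‖a • p.1‖ + ‖b • q.1‖ := norm_add_le _ _
        _ = a * ‖p.1‖ + b * ‖q.1‖ := by
            rw [norm_smul, norm_smul, Real.norm_of_nonneg ha, Real.norm_of_nonneg hb]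
        _ ≤ a * 1 + b * 1 := by
            gcongr; exacts [hp.1, hq.1]
        _ = 1 := by linarith
    · simp only [Prod.snd_add, Prod.smul_snd, Prod.fst_add, Prod.smul_fst]
      calc ‖a • p.2.1 + b • q.2.1‖ ≤ ‖a • p.2.1‖ + ‖b • q.2.1‖ := norm_add_le _ _
        _ = a * ‖p.2.1‖ + b * ‖q.2.1‖ := by
            rw [norm_smul, norm_smul, Real.norm_of_nonneg ha, Real.norm_of_nonneg hb]
        _ ≤ a * 1 + b * 1 := by
            gcongr; exacts [hp.2, hq.2]
        _ = 1 := by linarith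
  have hsub : MHDK n ⊆ {y : MHDState n | ‖y.1‖ ≤ 1 ∧ ‖y.2.1‖ ≤ 1} := by
    intro y hy; exact ⟨le_of_eq hy.1, le_of_eq hy.2.1⟩
  exact convexHull_min hsub hconv hx

lemma u_half (n : ℕ) {z : MHDState n × ℝ} (hz : z ∈ MHDU n) {c : MHDState n × ℝ}
    (hcV : MHDInV n c.1) (hc1 : c.1 ∈ convexHull ℝ (MHDK n)) (hc2 : c.2 ∈ Set.Icc (-1 : ℝ) 1) :
    (1/2 : ℝ) • (z + c) ∈ MHDU n := by
  obtain ⟨hzV, ρ, hρ, hball⟩ := hz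
  have hPV : MHDInV n ((1/2 : ℝ) • (z + c)).1 := by
    have := mhdInV_comb n (1/2) (1/2) hzV hcV
    have he : ((1/2 : ℝ) • (z + c)).1 = (1/2 : ℝ) • z.1 + (1/2 : ℝ) • c.1 := by
      simp [Prod.smul_fst, Prod.fst_add, smul_add]
    rw [he]; exact this
  refine ⟨hPV, ρ/2, by linarith, ?_⟩
  intro w hwV hw
  set P := (1/2 : ℝ) • (z + c) with hP
  set w' := (2 : ℝ) • w - c with hw'
  have hw'V : MHDInV n w'.1 := by
    have := mhdInV_comb n 2 (-1) hwV hcV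
    have he : w'.1 = (2 : ℝ) • w.1 + (-1 : ℝ) • c.1 := by
      simp [hw', Prod.fst_sub, Prod.smul_fst, sub_eq_add_neg]
    rw [he]; exact this
  have hdist : ‖w' - z‖ < ρ := by
    have he : w' - z = (2 : ℝ) • (w - P) := by
      rw [hw', hP]; module
    rw [he, norm_smul]
    simp only [Real.norm_ofNat]
    linarith [hw]
  obtain ⟨hw'1, hw'2⟩ := hball w' hw'V hdist
  have hwid : w = (1/2 : ℝ) • w' + (1/2 : ℝ) • c := by
    rw [hw']; module
  constructor
  · have : w.1 = (1/2 : ℝ) • w'.1 + (1/2 : ℝ) • c.1 := by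
      rw [hwid]; simp [Prod.fst_add, Prod.smul_fst]
    rw [this]
    exact (convex_convexHull ℝ (MHDK n)) hw'1 hc1 (by norm_num) (by norm_num) (by norm_num)
  · have : w.2 = (1/2 : ℝ) * w'.2 + (1/2 : ℝ) * c.2 := by
      rw [hwid]; simp [Prod.snd_add, Prod.smul_snd, smul_eq_mul]
    rw [this]
    obtain ⟨h1, h2⟩ := hw'2
    obtain ⟨h3, h4⟩ := hc2
    constructor <;> nlinarith


/-- linear functional `v ↦ ∑ j, p j * v j` on EuclideanSpace -/
def dotL (n : ℕ) (p : EuclideanSpace ℝ (Fin n)) : EuclideanSpace ℝ (Fin n) →ₗ[ℝ] ℝ where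
  toFun v := ∑ j, p j * v j
  map_add' v w := by
    simp only [PiLp.add_apply, mul_add]
    exact Finset.sum_add_distrib
  map_smul' c v := by
    simp only [PiLp.smul_apply, smul_eq_mul, RingHom.id_apply]
    rw [Finset.mul_sum]
    exact Finset.sum_congr rfl fun j _ => by ring

lemma exists_zeta (n : ℕ) (hn : 4 ≤ n) (p₁ p₂ q₁ q₂ : EuclideanSpace ℝ (Fin n)) :
    ∃ (ζ : EuclideanSpace ℝ (Fin n)) (s : ℝ), ¬ (ζ = 0 ∧ s = 0) ∧
      (∑ j, p₁ j * ζ j) = -s ∧ (∑ j, p₂ j * ζ j) = -s ∧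
      (∑ j, q₁ j * ζ j) = 0 ∧ (∑ j, q₂ j * ζ j) = 0 := by
  classical
  let f : (EuclideanSpace ℝ (Fin n) × ℝ) →ₗ[ℝ] (Fin 4 → ℝ) :=
    LinearMap.pi ![(dotL n p₁).comp (LinearMap.fst ℝ _ _) + LinearMap.snd ℝ _ _,
      (dotL n p₂).comp (LinearMap.fst ℝ _ _) + LinearMap.snd ℝ _ _,
      (dotL n q₁).comp (LinearMap.fst ℝ _ _),
      (dotL n q₂).comp (LinearMap.fst ℝ _ _)]
  have hker : LinearMap.ker f ≠ ⊥ := by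
    intro hbot
    have h1 := LinearMap.finrank_range_add_finrank_ker f
    have h2 : Module.finrank ℝ (EuclideanSpace ℝ (Fin n) × ℝ) = n + 1 := by
      rw [Module.finrank_prod, finrank_euclideanSpace_fin, Module.finrank_self]
    have h3 : Module.finrank ℝ (LinearMap.range f) ≤ 4 := by
      have := Submodule.finrank_le (LinearMap.range f)
      simpa [Module.finrank_pi] using this
    rw [hbot, finrank_bot, h2] at h1
    omega
  obtain ⟨v, hv, hv0⟩ := Submodule.exists_mem_ne_zero_of_ne_bot hker
  refine ⟨v.1, v.2, ?_, ?_, ?_, ?_, ?_⟩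
  · rintro ⟨h1, h2⟩
    exact hv0 (Prod.ext h1 h2)
  all_goals {
    have := LinearMap.mem_ker.mp hv
    have h0 := congrFun this 0
    have h1 := congrFun this 1
    have h2 := congrFun this 2
    have h3 := congrFun this 3
    simp only [f, LinearMap.pi_apply, Matrix.cons_val_zero, Matrix.cons_val_one, Matrix.head_cons,
      Matrix.cons_val_two, Matrix.tail_cons, Matrix.cons_val_three, LinearMap.add_apply,
      LinearMap.comp_apply, LinearMap.fst_apply, LinearMap.snd_apply, dotL, LinearMap.coe_mk,
      AddHom.coe_mk, Pi.zero_apply] at h0 h1 h2 h3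
    first
      | linarith [h0]
      | linarith [h1]
      | exact h2
      | exact h3 }


lemma lambda_pair (n : ℕ) (hn : 4 ≤ n) {k₁ k₂ : MHDState n}
    (h₁ : k₁ ∈ MHDK n) (h₂ : k₂ ∈ MHDK n) (r : ℝ) :
    MHDLambda n (r • (k₁ - k₂), 0) := by
  obtain ⟨-, -, hM1, hQ1⟩ := h₁
  obtain ⟨-, -, hM2, hQ2⟩ := h₂
  obtain ⟨ζ, s, hne, e1, e2, e3, e4⟩ := exists_zeta n hn k₁.1 k₂.1 k₁.2.1 k₂.2.1
  refine ⟨ζ, s, hne, ?_, ?_, ?_, ?_⟩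
  · intro i
    have hterm : ∀ j, ((r • (k₁ - k₂), (0:ℝ)).1.2.2.1 (i, j)
        + (r • (k₁ - k₂), (0:ℝ)).2 * (if i = j then (1:ℝ) else 0)) * ζ j
        = (r * k₁.1 i) * (k₁.1 j * ζ j) - (r * k₁.2.1 i) * (k₁.2.1 j * ζ j)
          - ((r * k₂.1 i) * (k₂.1 j * ζ j) - (r * k₂.2.1 i) * (k₂.2.1 j * ζ j)) := by
      intro j
      simp only [Prod.smul_fst, Prod.smul_snd, Prod.fst_sub, Prod.snd_sub,
        PiLp.smul_apply, PiLp.sub_apply, smul_eq_mul, zero_mul, add_zero]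
      rw [hM1 i j, hM2 i j]
      ring
    rw [Finset.sum_congr rfl (fun j _ => hterm j)]
    rw [Finset.sum_sub_distrib, Finset.sum_sub_distrib, Finset.sum_sub_distrib,
      ← Finset.mul_sum, ← Finset.mul_sum, ← Finset.mul_sum, ← Finset.mul_sum,
      e1, e2, e3, e4]
    have : (r • (k₁ - k₂), (0:ℝ)).1.1 i = r * (k₁.1 i - k₂.1 i) := by
      simp [Prod.smul_fst, Prod.fst_sub, PiLp.smul_apply, PiLp.sub_apply]
    rw [this]
    ring
  · have hterm : ∀ i, (r • (k₁ - k₂), (0:ℝ)).1.1 i * ζ i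
        = r * (k₁.1 i * ζ i) - r * (k₂.1 i * ζ i) := by
      intro i
      simp only [Prod.smul_fst, Prod.fst_sub, PiLp.smul_apply, PiLp.sub_apply, smul_eq_mul]
      ring
    rw [Finset.sum_congr rfl (fun i _ => hterm i), Finset.sum_sub_distrib,
      ← Finset.mul_sum, ← Finset.mul_sum, e1, e2]
    ring
  · intro i
    have hterm : ∀ j, (r • (k₁ - k₂), (0:ℝ)).1.2.2.2 (i, j) * ζ j
        = (r * k₁.2.1 i) * (k₁.1 j * ζ j) - (r * k₁.1 i) * (k₁.2.1 j * ζ j)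
          - ((r * k₂.2.1 i) * (k₂.1 j * ζ j) - (r * k₂.1 i) * (k₂.2.1 j * ζ j)) := by
      intro j
      simp only [Prod.smul_fst, Prod.smul_snd, Prod.fst_sub, Prod.snd_sub,
        PiLp.smul_apply, PiLp.sub_apply, smul_eq_mul]
      rw [hQ1 i j, hQ2 i j]
      ring
    rw [Finset.sum_congr rfl (fun j _ => hterm j)]
    rw [Finset.sum_sub_distrib, Finset.sum_sub_distrib, Finset.sum_sub_distrib,
      ← Finset.mul_sum, ← Finset.mul_sum, ← Finset.mul_sum, ← Finset.mul_sum,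
      e1, e2, e3, e4]
    have : (r • (k₁ - k₂), (0:ℝ)).1.2.1 i = r * (k₁.2.1 i - k₂.2.1 i) := by
      simp [Prod.smul_fst, Prod.smul_snd, Prod.fst_sub, Prod.snd_sub,
        PiLp.smul_apply, PiLp.sub_apply]
    rw [this]
    ring
  · have hterm : ∀ i, (r • (k₁ - k₂), (0:ℝ)).1.2.1 i * ζ i
        = r * (k₁.2.1 i * ζ i) - r * (k₂.2.1 i * ζ i) := by
      intro i
      simp only [Prod.smul_fst, Prod.smul_snd, Prod.fst_sub, Prod.snd_sub,
        PiLp.smul_apply, PiLp.sub_apply, smul_eq_mul]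
      ring
    rw [Finset.sum_congr rfl (fun i _ => hterm i), Finset.sum_sub_distrib,
      ← Finset.mul_sum, ← Finset.mul_sum, e3, e4]
    ring


lemma good_pair_aux (n : ℕ) {x : MHDState n} (hδpos : 0 < 2 - ‖x.1‖ - ‖x.2.1‖)
    {ι : Type} [Fintype ι] (kk : ι → MHDState n) (w : ι → ℝ)
    (hkkK : ∀ i, kk i ∈ MHDK n) (hwpos : ∀ i, 0 < w i)
    (hwsum : ∑ i, w i = 1) (hwrep : ∑ i, w i • kk i = x)
    (hcard : (Fintype.card ι : ℝ) ≤ ((Module.finrank ℝ (MHDState n) + 1 : ℕ) : ℝ)) :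
    ∃ (k₁ k₂ : MHDState n) (t : ℝ), k₁ ∈ MHDK n ∧ k₂ ∈ MHDK n ∧ 0 < t ∧
      (2 - ‖x.1‖ - ‖x.2.1‖) ≤ ((Module.finrank ℝ (MHDState n) + 1 : ℕ) : ℝ) ^ 2 *
        (t * (‖k₁.1 - k₂.1‖ + ‖k₁.2.1 - k₂.2.1‖)) ∧
      (0 < ‖k₁.1 - k₂.1‖ + ‖k₁.2.1 - k₂.2.1‖) ∧
      ∀ c : ℝ, |c| ≤ t → x + c • (k₁ - k₂) ∈ convexHull ℝ (MHDK n) := by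
  classical
  set Nr : ℝ := ((Module.finrank ℝ (MHDState n) + 1 : ℕ) : ℝ) with hNr
  have hNr1 : (1:ℝ) ≤ Nr := by rw [hNr]; exact_mod_cast Nat.le_add_left 1 _
  have hNrpos : (0:ℝ) < Nr := lt_of_lt_of_le one_pos hNr1
  set δ : ℝ := 2 - ‖x.1‖ - ‖x.2.1‖ with hδ
  haveI hne : Nonempty ι := by
    rcases isEmpty_or_nonempty ι with h | h
    · exfalso; rw [Finset.univ_eq_empty, Finset.sum_empty] at hwsum; norm_num at hwsum
    · exact h
  have hu_rep : ∑ i, w i • (kk i).1 = x.1 := by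
    have := congrArg Prod.fst hwrep
    rw [Prod.fst_sum] at this
    simpa [Prod.smul_fst] using this
  have hb_rep : ∑ i, w i • (kk i).2.1 = x.2.1 := by
    have := congrArg Prod.snd hwrep
    rw [Prod.snd_sum] at this
    have h2 := congrArg Prod.fst this
    rw [Prod.fst_sum] at h2
    simpa [Prod.smul_snd, Prod.smul_fst] using h2
  have hwle1 : ∀ i, w i ≤ 1 := by
    intro i
    rw [← hwsum]
    exact Finset.single_le_sum (fun j _ => (hwpos j).le) (Finset.mem_univ i)
  have hkey : ∀ (v : ι → EuclideanSpace ℝ (Fin n)) (m₀ : EuclideanSpace ℝ (Fin n)),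
      (∀ i, ‖v i‖ = 1) → (∑ i, w i • v i = m₀) →
      1 - ‖m₀‖ ≤ ∑ p : ι × ι, w p.1 * w p.2 * ‖v p.1 - v p.2‖ := by
    intro v m₀ hv hrep
    have hstep : ∀ j, 1 - ‖m₀‖ ≤ ∑ i, w i * ‖v i - v j‖ := by
      intro j
      have h1 : ∑ i, w i • (v j - v i) = v j - m₀ := by
        have : ∀ i, w i • (v j - v i) = w i • v j - w i • v i := fun i => smul_sub _ _ _
        rw [Finset.sum_congr rfl (fun i _ => this i), Finset.sum_sub_distrib,
          ← Finset.sum_smul, hwsum, one_smul, hrep]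
      have h2 : ‖v j - m₀‖ ≤ ∑ i, w i * ‖v i - v j‖ := by
        rw [← h1]
        refine le_trans (norm_sum_le _ _) ?_
        apply Finset.sum_le_sum
        intro i _
        rw [norm_smul, Real.norm_of_nonneg (hwpos i).le, norm_sub_rev]
      have h3 : ‖v j‖ - ‖m₀‖ ≤ ‖v j - m₀‖ := norm_sub_norm_le _ _
      rw [hv j] at h3
      linarith
    calc 1 - ‖m₀‖ = ∑ j, w j * (1 - ‖m₀‖) := by
          rw [← Finset.sum_mul, hwsum, one_mul]
      _ ≤ ∑ j, w j * (∑ i, w i * ‖v i - v j‖) := by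
          apply Finset.sum_le_sum
          intro j _
          exact mul_le_mul_of_nonneg_left (hstep j) (hwpos j).le
      _ = ∑ p : ι × ι, w p.1 * w p.2 * ‖v p.1 - v p.2‖ := by
          rw [Fintype.sum_prod_type_right]
          apply Finset.sum_congr rfl
          intro j _
          rw [Finset.mul_sum]
          apply Finset.sum_congr rfl
          intro i _
          ring
  have hdsum : δ ≤ ∑ p : ι × ι, w p.1 * w p.2 *
      (‖(kk p.1).1 - (kk p.2).1‖ + ‖(kk p.1).2.1 - (kk p.2).2.1‖) := by
    have h1 := hkey (fun i => (kk i).1) x.1 (fun i => (hkkK i).1) hu_rep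
    have h2 := hkey (fun i => (kk i).2.1) x.2.1 (fun i => (hkkK i).2.1) hb_rep
    have h3 : ∑ p : ι × ι, w p.1 * w p.2 *
        (‖(kk p.1).1 - (kk p.2).1‖ + ‖(kk p.1).2.1 - (kk p.2).2.1‖)
        = (∑ p : ι × ι, w p.1 * w p.2 * ‖(kk p.1).1 - (kk p.2).1‖)
          + ∑ p : ι × ι, w p.1 * w p.2 * ‖(kk p.1).2.1 - (kk p.2).2.1‖ := by
      rw [← Finset.sum_add_distrib]
      exact Finset.sum_congr rfl fun p _ => by ring
    rw [hδ, h3]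
    linarith
  have hpair : ∃ p : ι × ι, δ / Nr ^ 2 ≤ w p.1 * w p.2 *
      (‖(kk p.1).1 - (kk p.2).1‖ + ‖(kk p.1).2.1 - (kk p.2).2.1‖) := by
    have hcards : ((Finset.univ : Finset (ι × ι)).card : ℝ) ≤ Nr ^ 2 := by
      rw [Finset.card_univ, Fintype.card_prod]
      push_cast
      calc ((Fintype.card ι : ℝ) * (Fintype.card ι : ℝ)) ≤ Nr * Nr :=
            mul_le_mul hcard hcard (Nat.cast_nonneg _) (le_of_lt hNrpos)
        _ = Nr ^ 2 := by ring
    have hsumconst : ∑ _p : ι × ι, δ / Nr ^ 2 ≤ ∑ p : ι × ι, w p.1 * w p.2 *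
        (‖(kk p.1).1 - (kk p.2).1‖ + ‖(kk p.1).2.1 - (kk p.2).2.1‖) := by
      rw [Finset.sum_const, nsmul_eq_mul]
      have hNr2 : (0:ℝ) < Nr ^ 2 := by positivity
      have : ((Finset.univ : Finset (ι × ι)).card : ℝ) * (δ / Nr ^ 2) ≤ δ := by
        rw [div_eq_mul_inv]
        calc ((Finset.univ : Finset (ι × ι)).card : ℝ) * (δ * (Nr ^ 2)⁻¹)
            ≤ Nr ^ 2 * (δ * (Nr ^ 2)⁻¹) := by
              apply mul_le_mul_of_nonneg_right hcards
              positivity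
          _ = δ := by field_simp
      linarith [hdsum]
    obtain ⟨p, _, hp⟩ := Finset.exists_le_of_sum_le Finset.univ_nonempty hsumconst
    exact ⟨p, hp⟩
  obtain ⟨⟨i₀, j₀⟩, hp⟩ := hpair
  have hp' : δ / Nr ^ 2 ≤ w i₀ * w j₀ * (‖(kk i₀).1 - (kk j₀).1‖ + ‖(kk i₀).2.1 - (kk j₀).2.1‖) :=
    hp
  have hδNr : 0 < δ / Nr ^ 2 := by positivity
  have hseppos : 0 < ‖(kk i₀).1 - (kk j₀).1‖ + ‖(kk i₀).2.1 - (kk j₀).2.1‖ := by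
    rcases le_or_gt (‖(kk i₀).1 - (kk j₀).1‖ + ‖(kk i₀).2.1 - (kk j₀).2.1‖) 0 with h | h
    · exfalso
      have h0 : w i₀ * w j₀ * (‖(kk i₀).1 - (kk j₀).1‖ + ‖(kk i₀).2.1 - (kk j₀).2.1‖) ≤ 0 :=
        mul_nonpos_of_nonneg_of_nonpos (mul_nonneg (hwpos i₀).le (hwpos j₀).le) h
      linarith
    · exact h
  have hij : i₀ ≠ j₀ := by
    intro h
    rw [h] at hseppos
    simp at hseppos
  have htpos : 0 < min (w i₀) (w j₀) := lt_min (hwpos i₀) (hwpos j₀)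
  have htw : w i₀ * w j₀ ≤ min (w i₀) (w j₀) := by
    rcases min_cases (w i₀) (w j₀) with ⟨h1, h2⟩ | ⟨h1, h2⟩ <;> rw [h1] <;>
      nlinarith [(hwpos i₀).le, (hwpos j₀).le, hwle1 i₀, hwle1 j₀]
  refine ⟨kk i₀, kk j₀, min (w i₀) (w j₀), hkkK i₀, hkkK j₀, htpos, ?_, hseppos, ?_⟩
  · calc δ = Nr ^ 2 * (δ / Nr ^ 2) := by field_simp
      _ ≤ Nr ^ 2 * (min (w i₀) (w j₀) * (‖(kk i₀).1 - (kk j₀).1‖ + ‖(kk i₀).2.1 - (kk j₀).2.1‖)) := by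
          apply mul_le_mul_of_nonneg_left _ (by positivity)
          calc δ / Nr ^ 2 ≤ w i₀ * w j₀ * (‖(kk i₀).1 - (kk j₀).1‖ + ‖(kk i₀).2.1 - (kk j₀).2.1‖) :=
                hp'
            _ ≤ min (w i₀) (w j₀) * (‖(kk i₀).1 - (kk j₀).1‖ + ‖(kk i₀).2.1 - (kk j₀).2.1‖) :=
                mul_le_mul_of_nonneg_right htw hseppos.le
  · intro c hc
    have habs := abs_le.mp hc
    have hw'pos : ∀ i, (0:ℝ) ≤ w i + (if i = i₀ then c else 0) - (if i = j₀ then c else 0) := by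
      intro i
      rcases eq_or_ne i i₀ with h1 | h1
      · subst h1
        rw [if_pos rfl, if_neg hij]
        have := min_le_left (w i) (w j₀)
        linarith [habs.1]
      · rcases eq_or_ne i j₀ with h2 | h2
        · subst h2
          rw [if_neg h1, if_pos rfl]
          have := min_le_right (w i₀) (w i)
          linarith [habs.2]
        · rw [if_neg h1, if_neg h2]
          linarith [(hwpos i).le]
    have hw'sum : ∑ i, (w i + (if i = i₀ then c else 0) - (if i = j₀ then c else 0)) = 1 := by
      rw [Finset.sum_sub_distrib, Finset.sum_add_distrib]
      rw [Finset.sum_ite_eq' Finset.univ i₀ (fun _ => c),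
        Finset.sum_ite_eq' Finset.univ j₀ (fun _ => c)]
      simp [hwsum]
    have hw'rep : ∑ i, (w i + (if i = i₀ then c else 0) - (if i = j₀ then c else 0)) • kk i
        = x + c • (kk i₀ - kk j₀) := by
      have hterm : ∀ i, (w i + (if i = i₀ then c else 0) - (if i = j₀ then c else 0)) • kk i
          = w i • kk i + (if i = i₀ then c • kk i else 0) - (if i = j₀ then c • kk i else 0) := by
        intro i
        split_ifs <;> simp [add_smul, sub_smul]
      rw [Finset.sum_congr rfl (fun i _ => hterm i)]
      rw [Finset.sum_sub_distrib, Finset.sum_add_distrib,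
        Finset.sum_ite_eq' Finset.univ i₀ (fun i => c • kk i),
        Finset.sum_ite_eq' Finset.univ j₀ (fun i => c • kk i)]
      simp only [Finset.mem_univ, if_pos, hwrep]
      rw [smul_sub]
      abel
    rw [← hw'rep]
    exact mem_convexHull_of_exists_fintype _ kk hw'pos hw'sum (fun i => hkkK i) rfl

lemma good_pair (n : ℕ) {x : MHDState n} (hx : x ∈ convexHull ℝ (MHDK n))
    (hδpos : 0 < 2 - ‖x.1‖ - ‖x.2.1‖) :
    ∃ (k₁ k₂ : MHDState n) (t : ℝ), k₁ ∈ MHDK n ∧ k₂ ∈ MHDK n ∧ 0 < t ∧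
      (2 - ‖x.1‖ - ‖x.2.1‖) ≤ ((Module.finrank ℝ (MHDState n) + 1 : ℕ) : ℝ) ^ 2 *
        (t * (‖k₁.1 - k₂.1‖ + ‖k₁.2.1 - k₂.2.1‖)) ∧
      (0 < ‖k₁.1 - k₂.1‖ + ‖k₁.2.1 - k₂.2.1‖) ∧
      ∀ c : ℝ, |c| ≤ t → x + c • (k₁ - k₂) ∈ convexHull ℝ (MHDK n) := by
  obtain ⟨ι, hFin, kk, w, hrange, hAI, hwpos, hwsum, hwrep⟩ :=
    eq_pos_convex_span_of_mem_convexHull hx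
  letI := hFin
  have hcard : (Fintype.card ι : ℝ) ≤ ((Module.finrank ℝ (MHDState n) + 1 : ℕ) : ℝ) := by
    have h1 := hAI.card_le_finrank_succ
    have h2 : Module.finrank ℝ ↥(vectorSpan ℝ (Set.range kk)) ≤ Module.finrank ℝ (MHDState n) :=
      Submodule.finrank_le _
    exact_mod_cast le_trans h1 (Nat.add_le_add_right h2 1)
  exact good_pair_aux n hδpos kk w (fun i => hrange ⟨i, rfl⟩) hwpos hwsum hwrep hcard


lemma bdry_reflect (n : ℕ) {c y : MHDState n × ℝ} (hcV : MHDInV n c.1)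
    (hc1 : c.1 ∈ convexHull ℝ (MHDK n)) (hc2 : c.2 ∈ Set.Icc (-1:ℝ) 1)
    (hy : y ∈ MHDBdry n) : (2:ℝ) • y - c ∈ MHDBdry n := by
  obtain ⟨hyV, hyU⟩ := hy
  constructor
  · have hcomb := mhdInV_comb n 2 (-1) hyV hcV
    have he : ((2:ℝ) • y - c).1 = (2:ℝ) • y.1 + (-1:ℝ) • c.1 := by
      simp [Prod.fst_sub, Prod.smul_fst, sub_eq_add_neg]
    show MHDInV n ((2:ℝ) • y - c).1
    rw [he]; exact hcomb
  · intro hU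
    apply hyU
    have hhalf := u_half n hU hcV hc1 hc2
    have he : (1/2:ℝ) • (((2:ℝ) • y - c) + c) = y := by module
    rw [he] at hhalf
    exact hhalf

lemma zero_inV (n : ℕ) : MHDInV n (0 : MHDState n) := by
  refine ⟨fun i j => by simp, by simp, fun i j => by simp⟩

lemma bdry_nonempty (n : ℕ) : ((0 : MHDState n), (2:ℝ)) ∈ MHDBdry n := by
  constructor
  · exact zero_inV n
  · rintro ⟨-, ρ', hρ', hb⟩
    have h2 := (hb ((0:MHDState n), 2) (zero_inV n) (by simpa using hρ')).2
    have h3 : (2:ℝ) ≤ 1 := h2.2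
    linarith


/-- **Lemma 3.5 (1/2-relaxed local convexity along wave-cone directions).** For `n ≥ 4` and
`m ∈ (1, ∞)` there is `C₀ = C₀(n,m) > 0` such that every `z = (u,b,M,Q,q) ∈ 𝒰` admits a
nonzero wave-cone direction `z̄ = (ū,b̄,M̄,Q̄,0) ∈ Λ` for which the segment
`σ = {z + s z̄ : |s| ≤ 1}` lies in `𝒰` with `dist(σ,∂𝒰) ≥ (1/2) dist(z,∂𝒰)`, and for every
`ε ∈ (0,1)` one has `ε^{m−1}(2 − |u|^m − |b|^m) ≤ C₀ |(ū,b̄)|^m + 2 ε^m`. -/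
theorem relaxed_local_convexity (n : ℕ) (hn : 4 ≤ n) (m : ℝ) (hm : 1 < m) :
    ∃ C₀ : ℝ, 0 < C₀ ∧
      ∀ z : MHDState n × ℝ, z ∈ MHDU n →
        ∃ zbar : MHDState n × ℝ, zbar ≠ 0 ∧ zbar.2 = 0 ∧ MHDInV n zbar.1 ∧
          MHDLambda n zbar ∧
          (∀ s : ℝ, |s| ≤ 1 → z + s • zbar ∈ MHDU n ∧
            (1 / 2) * Metric.infDist z (MHDBdry n)
              ≤ Metric.infDist (z + s • zbar) (MHDBdry n)) ∧
          (∀ ε : ℝ, 0 < ε → ε < 1 →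
            ε ^ (m - 1) * (2 - ‖z.1.1‖ ^ m - ‖z.1.2.1‖ ^ m)
              ≤ C₀ * (Real.sqrt (‖zbar.1.1‖ ^ 2 + ‖zbar.1.2.1‖ ^ 2)) ^ m
                + 2 * ε ^ m) := by
  classical
  have hnorm2 : (0:ℝ) < Real.sqrt 2 := Real.sqrt_pos.mpr (by norm_num)
  have hmpos : (0:ℝ) < m := lt_trans one_pos hm
  set Nr : ℝ := ((Module.finrank ℝ (MHDState n) + 1 : ℕ) : ℝ) with hNr
  have hNr1 : (1:ℝ) ≤ Nr := by rw [hNr]; exact_mod_cast Nat.le_add_left 1 _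
  have hNrpos : (0:ℝ) < Nr := lt_of_lt_of_le one_pos hNr1
  set Kc : ℝ := 4 * Real.sqrt 2 * m * Nr ^ 2 with hKc
  have hKcpos : 0 < Kc := by positivity
  refine ⟨2 * (Kc/2) ^ m, by positivity, ?_⟩
  intro z hz
  obtain ⟨hzV, ρ, hρ, hball⟩ := hz
  have hzU : z ∈ MHDU n := ⟨hzV, ρ, hρ, hball⟩
  have hz1 : z.1 ∈ convexHull ℝ (MHDK n) ∧ z.2 ∈ Set.Icc (-1:ℝ) 1 :=
    hball z hzV (by simp [hρ])
  have hnorm_le := hull_norms n hz1.1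
  have hδpos : 0 < 2 - ‖z.1.1‖ - ‖z.1.2.1‖ := by
    rcases eq_or_ne z.1.1 0 with h0 | h0
    · rw [h0, norm_zero]
      linarith [hnorm_le.2]
    · have hupos : 0 < ‖z.1.1‖ := norm_pos_iff.mpr h0
      set cc : ℝ := ρ / (2 * ‖z.1.1‖) with hcc
      have hccpos : 0 < cc := by positivity
      set xu : MHDState n := ((1 + cc) • z.1.1, z.1.2) with hxu
      have hwV : MHDInV n xu := hzV
      have hdiff : (xu, z.2) - z = ((cc • z.1.1, 0), 0) := by
        rw [hxu]
        refine Prod.ext ?_ (by simp)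
        refine Prod.ext ?_ (by simp)
        simp only [Prod.fst_sub]
        module
      have hnd : ‖(xu, z.2) - z‖ < ρ := by
        rw [hdiff]
        have h1 : ‖cc • z.1.1‖ = ρ/2 := by
          rw [norm_smul, Real.norm_of_nonneg hccpos.le, hcc]
          field_simp
        have hh1 : ‖((cc • z.1.1, (0 : (EuclideanSpace ℝ (Fin n)) ×
            (EuclideanSpace ℝ (Fin n × Fin n)) × (EuclideanSpace ℝ (Fin n × Fin n)))), (0:ℝ))‖
            = max ‖(cc • z.1.1, (0 : (EuclideanSpace ℝ (Fin n)) ×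
            (EuclideanSpace ℝ (Fin n × Fin n)) × (EuclideanSpace ℝ (Fin n × Fin n))))‖ 0 := by
          rw [Prod.norm_def]; simp
        rw [hh1]
        have hh2 : ‖((cc • z.1.1), (0 : (EuclideanSpace ℝ (Fin n)) ×
            (EuclideanSpace ℝ (Fin n × Fin n)) × (EuclideanSpace ℝ (Fin n × Fin n))))‖
            = max ‖cc • z.1.1‖ 0 := by
          rw [Prod.norm_def]; simp
        rw [hh2, h1]
        rw [max_eq_left (by linarith : (0:ℝ) ≤ ρ/2),
          max_eq_left (by linarith : (0:ℝ) ≤ ρ/2)]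
        linarith
      have hmem := (hball (xu, z.2) hwV hnd).1
      have hle := (hull_norms n hmem).1
      have hxu1 : ‖xu.1‖ = ‖z.1.1‖ + ρ/2 := by
        rw [hxu]
        simp only
        rw [norm_smul, Real.norm_of_nonneg (by linarith), hcc]
        field_simp
      rw [hxu1] at hle
      linarith [hnorm_le.2]
  obtain ⟨k₁, k₂, t, hk₁, hk₂, htpos, hδbound, hseppos, hseg⟩ := good_pair n hz1.1 hδpos
  refine ⟨((t/4) • (k₁ - k₂), 0), ?_, rfl, ?_, ?_, ?_, ?_⟩
  · -- nonzero
    intro h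
    have h1 := congrArg Prod.fst h
    simp only [Prod.fst_zero] at h1
    have h2 : k₁ - k₂ = 0 := by
      have ht4 : (t/4 : ℝ) ≠ 0 := by positivity
      rcases smul_eq_zero.mp h1 with h | h
      · exact absurd h ht4
      · exact h
    have h3 : k₁ = k₂ := sub_eq_zero.mp h2
    rw [h3] at hseppos
    simp at hseppos
  · -- InV
    have hdiffV : MHDInV n (k₁ - k₂) := by
      have := mhdInV_comb n 1 (-1) (mhdK_inV n hk₁) (mhdK_inV n hk₂)
      have he : (1:ℝ) • k₁ + (-1:ℝ) • k₂ = k₁ - k₂ := by module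
      rwa [he] at this
    have := mhdInV_comb n (t/4) 0 hdiffV hdiffV
    have he : (t/4) • (k₁ - k₂) + (0:ℝ) • (k₁ - k₂) = (t/4) • (k₁ - k₂) := by module
    rwa [he] at this
  · -- Lambda
    exact lambda_pair n hn hk₁ hk₂ (t/4)
  · -- segment
    intro s hs
    set zb : MHDState n × ℝ := ((t/4) • (k₁ - k₂), 0) with hzb
    set c : MHDState n × ℝ := z + (2*s) • zb with hc
    have hc1 : c.1 = z.1 + (s*(t/2)) • (k₁ - k₂) := by
      rw [hc, hzb]
      simp only [Prod.fst_add, Prod.smul_fst, smul_smul]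
      congr 2
      ring
    have hc2 : c.2 = z.2 := by
      rw [hc, hzb]
      simp
    have hcHull : c.1 ∈ convexHull ℝ (MHDK n) := by
      rw [hc1]
      apply hseg
      rw [abs_mul]
      calc |s| * |t/2| ≤ 1 * |t/2| :=
            mul_le_mul_of_nonneg_right hs (abs_nonneg _)
        _ = t/2 := by rw [one_mul, abs_of_nonneg (by linarith)]
        _ ≤ t := by linarith
    have hcIcc : c.2 ∈ Set.Icc (-1:ℝ) 1 := by rw [hc2]; exact hz1.2
    have hdiffV : MHDInV n (k₁ - k₂) := by
      have := mhdInV_comb n 1 (-1) (mhdK_inV n hk₁) (mhdK_inV n hk₂)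
      have he : (1:ℝ) • k₁ + (-1:ℝ) • k₂ = k₁ - k₂ := by module
      rwa [he] at this
    have hcV : MHDInV n c.1 := by
      rw [hc1]
      have := mhdInV_comb n 1 (s*(t/2)) hzV hdiffV
      have he : (1:ℝ) • z.1 + (s*(t/2)) • (k₁ - k₂) = z.1 + (s*(t/2)) • (k₁ - k₂) := by
        module
      rwa [he] at this
    have hmid : z + s • zb = (1/2:ℝ) • (z + c) := by
      rw [hc]; module
    constructor
    · rw [hmid]
      exact u_half n hzU hcV hcHull hcIcc
    · -- distance bound
      by_contra hcon
      push_neg at hcon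
      have hBne : (MHDBdry n).Nonempty := ⟨((0:MHDState n), 2), bdry_nonempty n⟩
      rw [Metric.infDist_lt_iff hBne] at hcon
      obtain ⟨y, hyB, hy⟩ := hcon
      have hy'B : (2:ℝ) • y - c ∈ MHDBdry n := bdry_reflect n hcV hcHull hcIcc hyB
      have hd1 : Metric.infDist z (MHDBdry n) ≤ dist z ((2:ℝ) • y - c) :=
        Metric.infDist_le_dist_of_mem hy'B
      have hd2 : dist z ((2:ℝ) • y - c) = 2 * dist (z + s • zb) y := by
        rw [dist_eq_norm, dist_eq_norm]
        have he : z - ((2:ℝ) • y - c) = (2:ℝ) • ((z + s • zb) - y) := by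
          rw [hc]; module
        rw [he, norm_smul]
        simp
      rw [hd2] at hd1
      linarith
  · -- epsilon inequality
    intro ε hε hε1
    have ha1' : ‖((t/4) • (k₁ - k₂), (0:ℝ)).1.1‖ = (t/4) * ‖k₁.1 - k₂.1‖ := by
      have he : ((t/4) • (k₁ - k₂), (0:ℝ)).1.1 = (t/4) • (k₁.1 - k₂.1) := by
        simp [Prod.smul_fst, Prod.fst_sub]
      rw [he, norm_smul, Real.norm_of_nonneg (by positivity : (0:ℝ) ≤ t/4)]
    have hb1' : ‖((t/4) • (k₁ - k₂), (0:ℝ)).1.2.1‖ = (t/4) * ‖k₁.2.1 - k₂.2.1‖ := by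
      have he : ((t/4) • (k₁ - k₂), (0:ℝ)).1.2.1 = (t/4) • (k₁.2.1 - k₂.2.1) := by
        simp [Prod.smul_fst, Prod.smul_snd, Prod.fst_sub, Prod.snd_sub]
      rw [he, norm_smul, Real.norm_of_nonneg (by positivity : (0:ℝ) ≤ t/4)]
    have hber : ∀ x : ℝ, 0 ≤ x → 1 + m * (x - 1) ≤ x ^ m := by
      intro x hx
      have hh := one_add_mul_self_le_rpow_one_add (by linarith : (-1:ℝ) ≤ x - 1) hm.le
      have he : (1:ℝ) + (x - 1) = x := by ring
      rwa [he] at hh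
    have hAδ : 2 - ‖z.1.1‖ ^ m - ‖z.1.2.1‖ ^ m ≤ m * (2 - ‖z.1.1‖ - ‖z.1.2.1‖) := by
      have h1 := hber ‖z.1.1‖ (norm_nonneg _)
      have h2 := hber ‖z.1.2.1‖ (norm_nonneg _)
      linarith
    have hsq := sqrt2_low (norm_nonneg (((t/4) • (k₁ - k₂), (0:ℝ)).1.1))
      (norm_nonneg (((t/4) • (k₁ - k₂), (0:ℝ)).1.2.1))
    have hAB : 2 - ‖z.1.1‖ ^ m - ‖z.1.2.1‖ ^ m ≤ Kc * Real.sqrt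
        (‖((t/4) • (k₁ - k₂), (0:ℝ)).1.1‖ ^ 2 + ‖((t/4) • (k₁ - k₂), (0:ℝ)).1.2.1‖ ^ 2) := by
      have hδa : (2 - ‖z.1.1‖ - ‖z.1.2.1‖) ≤ 4 * Nr ^ 2 *
          (‖((t/4) • (k₁ - k₂), (0:ℝ)).1.1‖ + ‖((t/4) • (k₁ - k₂), (0:ℝ)).1.2.1‖) := by
        rw [ha1', hb1']
        calc (2 - ‖z.1.1‖ - ‖z.1.2.1‖)
            ≤ Nr ^ 2 * (t * (‖k₁.1 - k₂.1‖ + ‖k₁.2.1 - k₂.2.1‖)) := hδbound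
          _ = 4 * Nr ^ 2 * ((t/4) * ‖k₁.1 - k₂.1‖ + (t/4) * ‖k₁.2.1 - k₂.2.1‖) := by ring
      have hmono : 4 * Nr ^ 2 *
          (‖((t/4) • (k₁ - k₂), (0:ℝ)).1.1‖ + ‖((t/4) • (k₁ - k₂), (0:ℝ)).1.2.1‖)
          ≤ 4 * Nr ^ 2 * (Real.sqrt 2 * Real.sqrt
          (‖((t/4) • (k₁ - k₂), (0:ℝ)).1.1‖ ^ 2 + ‖((t/4) • (k₁ - k₂), (0:ℝ)).1.2.1‖ ^ 2)) := by
        apply mul_le_mul_of_nonneg_left hsq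
        positivity
      calc 2 - ‖z.1.1‖ ^ m - ‖z.1.2.1‖ ^ m
          ≤ m * (2 - ‖z.1.1‖ - ‖z.1.2.1‖) := hAδ
        _ ≤ m * (4 * Nr ^ 2 * (Real.sqrt 2 * Real.sqrt
            (‖((t/4) • (k₁ - k₂), (0:ℝ)).1.1‖ ^ 2
              + ‖((t/4) • (k₁ - k₂), (0:ℝ)).1.2.1‖ ^ 2))) := by
            apply mul_le_mul_of_nonneg_left _ hmpos.le
            exact le_trans hδa hmono
        _ = Kc * Real.sqrt (‖((t/4) • (k₁ - k₂), (0:ℝ)).1.1‖ ^ 2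
              + ‖((t/4) • (k₁ - k₂), (0:ℝ)).1.2.1‖ ^ 2) := by
            rw [hKc]; ring
    exact eps_ineq m hm Kc _ _ ε hKcpos (Real.sqrt_nonneg _) hAB hε
end

section
/- Let n ≥ 4 and let u₁, u₂, b₁, b₂ ∈ ℝⁿ be unit vectors. Then there exists (ζ,s) ∈ ℝⁿ × ℝ with (ζ,s) ≠ 0 such that: (u₁ ⊗ u₁ − b₁ ⊗ b₁ − u₂ ⊗ u₂ + b₂ ⊗ b₂)ζ + s(u₁ − u₂) = 0, (b₁ ⊗ u₁ − u₁ ⊗ b₁ − b₂ ⊗ u₂ + u₂ ⊗ b₂)ζ + s(b₁ − b₂) = 0, (u₁ − u₂) · ζ = 0, and (b₁ − b₂) · ζ = 0. Consequently, the difference of any two elements of the constitutive set K lies in the wave cone Λ. -/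
open scoped RealInnerProductSpace

/-- **Wave-cone condition (equations (4.4)–(4.6) in the proof of Lemma 3.5).** For `n ≥ 4`
and unit vectors `u₁, u₂, b₁, b₂ ∈ ℝⁿ` there exists a nonzero `(ζ, s) ∈ ℝⁿ × ℝ` with
`(u₁⊗u₁ − b₁⊗b₁ − u₂⊗u₂ + b₂⊗b₂)ζ + s(u₁ − u₂) = 0`,
`(b₁⊗u₁ − u₁⊗b₁ − b₂⊗u₂ + u₂⊗b₂)ζ + s(b₁ − b₂) = 0`,
`(u₁ − u₂)·ζ = 0` and `(b₁ − b₂)·ζ = 0`; consequently differences of elements of the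
constitutive set `K` lie in the wave cone `Λ`. -/
theorem difference_in_wave_cone (n : ℕ) (hn : 4 ≤ n)
    (u₁ u₂ b₁ b₂ : EuclideanSpace ℝ (Fin n))
    (hu₁ : ‖u₁‖ = 1) (hu₂ : ‖u₂‖ = 1) (hb₁ : ‖b₁‖ = 1) (hb₂ : ‖b₂‖ = 1) :
    ∃ (ζ : EuclideanSpace ℝ (Fin n)) (s : ℝ), ¬ (ζ = 0 ∧ s = 0) ∧
      ⟪u₁, ζ⟫ • u₁ - ⟪b₁, ζ⟫ • b₁ - ⟪u₂, ζ⟫ • u₂ + ⟪b₂, ζ⟫ • b₂ + s • (u₁ - u₂) = 0 ∧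
      ⟪u₁, ζ⟫ • b₁ - ⟪b₁, ζ⟫ • u₁ - ⟪u₂, ζ⟫ • b₂ + ⟪b₂, ζ⟫ • u₂ + s • (b₁ - b₂) = 0 ∧
      ⟪u₁ - u₂, ζ⟫ = 0 ∧ ⟪b₁ - b₂, ζ⟫ = 0 := by
  -- Consider the span of the three vectors `u₁ - u₂, b₁, b₂`.
  set S : Submodule ℝ (EuclideanSpace ℝ (Fin n)) :=
    Submodule.span ℝ {u₁ - u₂, b₁, b₂} with hS
  have hdim : Module.finrank ℝ S ≤ 3 := by
    classical
    have h := finrank_span_le_card (R := ℝ)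
      ({u₁ - u₂, b₁, b₂} : Set (EuclideanSpace ℝ (Fin n)))
    refine h.trans ?_
    simp only [Set.toFinset_insert, Set.toFinset_singleton]
    exact (Finset.card_insert_le _ _).trans
      (Nat.succ_le_succ ((Finset.card_insert_le _ _).trans (by simp)))
  have hpos : 0 < Module.finrank ℝ Sᗮ := by
    have hsum := Submodule.finrank_add_finrank_orthogonal (K := S)
    have htot : Module.finrank ℝ (EuclideanSpace ℝ (Fin n)) = n := by
      simp
    omega
  have hne : Sᗮ ≠ ⊥ := by
    intro h
    rw [h] at hpos
    simp at hpos
  obtain ⟨ζ, hζS, hζ0⟩ := Submodule.exists_mem_ne_zero_of_ne_bot hne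
  have horth : ∀ v ∈ S, ⟪v, ζ⟫ = 0 := fun v hv => (Submodule.mem_orthogonal S ζ).mp hζS v hv
  have h1 : ⟪u₁ - u₂, ζ⟫ = 0 := horth _ (Submodule.subset_span (by simp))
  have h2 : ⟪b₁, ζ⟫ = 0 := horth _ (Submodule.subset_span (by simp))
  have h3 : ⟪b₂, ζ⟫ = 0 := horth _ (Submodule.subset_span (by simp))
  have h4 : ⟪u₂, ζ⟫ = ⟪u₁, ζ⟫ := by
    have := inner_sub_left (𝕜 := ℝ) u₁ u₂ ζ
    rw [h1] at this; linarith
  refine ⟨ζ, -⟪u₁, ζ⟫, fun h => hζ0 h.1, ?_, ?_, h1, ?_⟩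
  · rw [h2, h3, h4]
    module
  · rw [h2, h3, h4]
    module
  · rw [inner_sub_left, h2, h3]; ring
end

section
/- Let X be a real normed vector space, let U ⊂ X be an open convex set, let z ∈ U, and let z̄ ∈ X be such that z + s z̄ belongs to the closure of U for every real s with |s| ≤ 2. Then for every s with |s| ≤ 1, the distance from z + s z̄ to the complement of U satisfies dist(z + s z̄, X \ U) ≥ (1/2) dist(z, X \ U). In particular, the segment σ = { z + s z̄ : |s| ≤ 1 } is contained in U with dist(σ, ∂U) ≥ (1/2) dist(z, ∂U). -/
/-- **Geometric lemma behind relaxed local convexity (Lemma 3.2/3.5).** Let `U` be an open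
convex set in a real normed space, `z ∈ U`, and suppose `z + s z̄ ∈ closure U` for all
`|s| ≤ 2`. Then for all `|s| ≤ 1` the point `z + s z̄` lies in `U` and
`dist(z + s z̄, X \ U) ≥ (1/2) dist(z, X \ U)`; in particular the segment
`σ = {z + s z̄ : |s| ≤ 1}` lies in `U` with `dist(σ, ∂U) ≥ (1/2) dist(z, ∂U)`. -/
theorem segment_dist_to_boundary {X : Type*} [NormedAddCommGroup X] [NormedSpace ℝ X]
    (U : Set X) (hU : IsOpen U) (hconv : Convex ℝ U) (z : X) (hz : z ∈ U) (zbar : X)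
    (hseg : ∀ s : ℝ, |s| ≤ 2 → z + s • zbar ∈ closure U) :
    ∀ s : ℝ, |s| ≤ 1 → z + s • zbar ∈ U ∧
      (1 / 2) * Metric.infDist z Uᶜ ≤ Metric.infDist (z + s • zbar) Uᶜ := by
  intro s hs
  rcases Set.eq_empty_or_nonempty Uᶜ with h | hne
  · have hUuniv : U = Set.univ := by
      rw [← Set.compl_empty_iff]; exact h
    refine ⟨by simp [hUuniv], ?_⟩
    simp [h, Metric.infDist_empty]
  set r := Metric.infDist z Uᶜ with hr_def
  have hr : 0 < r := by
    have := (hU.isClosed_compl.notMem_iff_infDist_pos hne (x := z)).1 (by simpa using hz)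
    simpa [hr_def] using this
  have hball : Metric.ball z r ⊆ U := by
    intro q hq
    by_contra hqU
    have h1 : r ≤ dist z q := Metric.infDist_le_dist_of_mem (show q ∈ Uᶜ from hqU)
    rw [Metric.mem_ball, dist_comm] at hq
    linarith
  have hcl : z + (2 * s) • zbar ∈ closure U := by
    apply hseg
    rw [abs_mul, abs_two]
    nlinarith [abs_nonneg s]
  have hball2 : Metric.ball (z + s • zbar) (r / 2) ⊆ U := by
    intro p hp
    set q := (2 : ℝ) • p - z - (2 * s) • zbar with hq_def
    have hqball : q ∈ Metric.ball z r := by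
      rw [Metric.mem_ball, dist_eq_norm] at hp ⊢
      have : q - z = (2 : ℝ) • (p - (z + s • zbar)) := by
        rw [hq_def]
        module
      rw [this, norm_smul]
      simp only [Real.norm_ofNat]
      linarith
    have hqU : q ∈ interior U := by rw [hU.interior_eq]; exact hball hqball
    have hcombo := hconv.combo_interior_closure_mem_interior hqU hcl
      (by norm_num : (0:ℝ) < 1/2) (by norm_num : (0:ℝ) ≤ 1/2) (by norm_num)
    have hp_eq : (1/2 : ℝ) • q + (1/2 : ℝ) • (z + (2 * s) • zbar) = p := by
      rw [hq_def]; module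
    rw [hp_eq, hU.interior_eq] at hcombo
    exact hcombo
  have hmem : z + s • zbar ∈ U := hball2 (by simp [Metric.mem_ball]; linarith)
  refine ⟨hmem, ?_⟩
  have : r / 2 ≤ Metric.infDist (z + s • zbar) Uᶜ := by
    by_contra hlt
    push_neg at hlt
    obtain ⟨y, hy, hdy⟩ := (Metric.infDist_lt_iff hne).1 hlt
    exact hy (hball2 (by rwa [Metric.mem_ball, dist_comm]))
  linarith
end
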